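/- Let γ ≥ 1 be a real number and K ≥ 1 a natural number. Let s : (Fin K → Bool) → ℝ assign a positive size to each leaf of the full binary tree of depth K (leaves indexed by length-K bit strings). For a bit string b of length j < K, let L(b) denote the sum of s(w) over all leaves w whose first j bits equal b and whose (j+1)-st bit is false, and let G(b) denote the sum of s(w) over all leaves w whose first j bits equal b and whose (j+1)-st bit is true. Suppose that for every j < K and every bit string b of length j, both L(b) and G(b) are positive and 1/γ ≤ L(b)/G(b) ≤ γ. Then for any two leaves w and w', s(w) ≤ γ^(2K) · s(w'). -/

import Mathlib

open Finset

/-- **Proposition 1 (Balanced Quantization).**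
Leaves of the full binary tree of depth `K` are indexed by bit strings
`w : Fin K → Bool`, each with a positive size `s w`.  For a prefix `b` of
length `j < K`, `L` is the total size of leaves extending `b` with next bit
`false` and `G` the total size of those with next bit `true`.  If at every
node `1/γ ≤ L/G ≤ γ` (with `L, G > 0`), then any leaf size is at most
`γ ^ (2 * K)` times any other leaf size. -/
theorem balanced_quantization_ratio_bound
    (γ : ℝ) (hγ : 1 ≤ γ) (K : ℕ) (hK : 1 ≤ K)
    (s : (Fin K → Bool) → ℝ) (hs : ∀ w, 0 < s w)
    (hbal : ∀ (j : ℕ) (hj : j < K) (b : Fin K → Bool),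
      letI L : ℝ := ∑ w ∈ univ.filter
        (fun w : Fin K → Bool =>
          (∀ i : Fin K, (i : ℕ) < j → w i = b i) ∧ w ⟨j, hj⟩ = false), s w
      letI G : ℝ := ∑ w ∈ univ.filter
        (fun w : Fin K → Bool =>
          (∀ i : Fin K, (i : ℕ) < j → w i = b i) ∧ w ⟨j, hj⟩ = true), s w
      0 < L ∧ 0 < G ∧ 1 / γ ≤ L / G ∧ L / G ≤ γ) :
    ∀ w w' : Fin K → Bool, s w ≤ γ ^ (2 * K) * s w' := by
  have hγ0 : (0:ℝ) < γ := lt_of_lt_of_le one_pos hγ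
  have h1γ : (0:ℝ) < 1 + γ := by linarith
  set T : ℝ := ∑ v, s v with hT
  set P : ℕ → (Fin K → Bool) → ℝ := fun j b =>
    ∑ v ∈ univ.filter (fun v : Fin K → Bool => ∀ i : Fin K, (i:ℕ) < j → v i = b i), s v
    with hPdef
  -- splitting identity
  have hsplit : ∀ (j : ℕ) (hj : j < K) (b : Fin K → Bool),
      P j b = (∑ v ∈ univ.filter (fun v : Fin K → Bool =>
          (∀ i : Fin K, (i:ℕ) < j → v i = b i) ∧ v ⟨j,hj⟩ = false), s v)
        + (∑ v ∈ univ.filter (fun v : Fin K → Bool =>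
          (∀ i : Fin K, (i:ℕ) < j → v i = b i) ∧ v ⟨j,hj⟩ = true), s v) := by
    intro j hj b
    simp only [hPdef]
    rw [← Finset.sum_filter_add_sum_filter_not
        (univ.filter (fun v : Fin K → Bool => ∀ i : Fin K, (i:ℕ) < j → v i = b i))
        (fun v => v ⟨j,hj⟩ = false)]
    rw [Finset.filter_filter, Finset.filter_filter]
    simp [Bool.not_eq_false]
  -- child as L or G
  have hchild : ∀ (j : ℕ) (hj : j < K) (b : Fin K → Bool),
      P (j+1) b = ∑ v ∈ univ.filter (fun v : Fin K → Bool =>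
          (∀ i : Fin K, (i:ℕ) < j → v i = b i) ∧ v ⟨j,hj⟩ = b ⟨j,hj⟩), s v := by
    intro j hj b
    simp only [hPdef]
    apply Finset.sum_congr
    · apply Finset.filter_congr
      intro v _
      constructor
      · intro h
        refine ⟨fun i hi => h i (Nat.lt_succ_of_lt hi), h ⟨j,hj⟩ (Nat.lt_succ_self j)⟩
      · rintro ⟨h1, h2⟩ i hi
        rcases Nat.lt_succ_iff_lt_or_eq.mp hi with h | h
        · exact h1 i h
        · have : i = ⟨j, hj⟩ := Fin.ext h
          rw [this]; exact h2
    · intros; rfl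
  -- main induction
  have key : ∀ (j : ℕ), j ≤ K → ∀ b : Fin K → Bool,
      T ≤ (1+γ)^j * P j b ∧ (1+γ)^j * P j b ≤ γ^j * T := by
    intro j
    induction j with
    | zero =>
      intro _ b
      have : P 0 b = T := by
        simp only [hPdef, hT]
        congr 1
        apply Finset.filter_true_of_mem
        intro v _
        intro i hi
        exact absurd hi (Nat.not_lt_zero _)
      simp [this]
    | succ j ih =>
      intro hjK b
      have hj : j < K := hjK
      obtain ⟨ih1, ih2⟩ := ih (le_of_lt hj) b
      obtain ⟨hL, hG, hr1, hr2⟩ := hbal j hj b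
      set L : ℝ := ∑ v ∈ univ.filter (fun v : Fin K → Bool =>
          (∀ i : Fin K, (i:ℕ) < j → v i = b i) ∧ v ⟨j,hj⟩ = false), s v with hLdef
      set G : ℝ := ∑ v ∈ univ.filter (fun v : Fin K → Bool =>
          (∀ i : Fin K, (i:ℕ) < j → v i = b i) ∧ v ⟨j,hj⟩ = true), s v with hGdef
      have hLG : L ≤ γ * G := by
        rw [div_le_iff₀ hG] at hr2; linarith [hr2]
      have hGL : G ≤ γ * L := by
        rw [div_le_div_iff₀ hγ0 hG] at hr1; linarith [hr1]
      have hPsum : P j b = L + G := hsplit j hj b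
      have hchildval : P (j+1) b = L ∨ P (j+1) b = G := by
        rcases Bool.eq_false_or_eq_true (b ⟨j,hj⟩) with hb | hb
        · right; rw [hchild j hj b, hb]
        · left; rw [hchild j hj b, hb]
      have hlow : P j b ≤ (1+γ) * P (j+1) b := by
        rcases hchildval with h | h <;> rw [h, hPsum] <;> nlinarith
      have hhigh : (1+γ) * P (j+1) b ≤ γ * P j b := by
        rcases hchildval with h | h <;> rw [h, hPsum] <;> nlinarith
      have hpow : (0:ℝ) < (1+γ)^j := pow_pos h1γ j
      constructor
      · calc T ≤ (1+γ)^j * P j b := ih1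
          _ ≤ (1+γ)^j * ((1+γ) * P (j+1) b) :=
              mul_le_mul_of_nonneg_left hlow (le_of_lt hpow)
          _ = (1+γ)^(j+1) * P (j+1) b := by ring
      · calc (1+γ)^(j+1) * P (j+1) b = (1+γ)^j * ((1+γ) * P (j+1) b) := by ring
          _ ≤ (1+γ)^j * (γ * P j b) :=
              mul_le_mul_of_nonneg_left hhigh (le_of_lt hpow)
          _ = γ * ((1+γ)^j * P j b) := by ring
          _ ≤ γ * (γ^j * T) := mul_le_mul_of_nonneg_left ih2 (le_of_lt hγ0)
          _ = γ^(j+1) * T := by ring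
  -- P K w = s w
  have hPK : ∀ w : Fin K → Bool, P K w = s w := by
    intro w
    simp only [hPdef]
    rw [show (univ.filter (fun v : Fin K → Bool => ∀ i : Fin K, (i:ℕ) < K → v i = w i))
        = {w} from ?_]
    · simp
    · ext v
      simp only [Finset.mem_filter, Finset.mem_univ, true_and, Finset.mem_singleton]
      constructor
      · intro h; funext i; exact h i i.isLt
      · intro h i _; rw [h]
  intro w w'
  obtain ⟨h1, _⟩ := key K le_rfl w'
  obtain ⟨_, h2⟩ := key K le_rfl w
  rw [hPK] at h1 h2
  have hpow : (0:ℝ) < (1+γ)^K := pow_pos h1γ K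
  have step : (1+γ)^K * s w ≤ γ^K * ((1+γ)^K * s w') :=
    le_trans h2 (mul_le_mul_of_nonneg_left h1 (le_of_lt (pow_pos hγ0 K)))
  have hsw : s w ≤ γ^K * s w' := by
    have := (mul_le_mul_iff_right₀ hpow).mp (by linarith [step] : (1+γ)^K * s w ≤ (1+γ)^K * (γ^K * s w'))
    exact this
  calc s w ≤ γ^K * s w' := hsw
    _ ≤ γ^(2*K) * s w' := by
        apply mul_le_mul_of_nonneg_right _ (le_of_lt (hs w'))
        exact pow_le_pow_right₀ hγ (by omega)
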